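/- Let G be a group with finite generating set X and word metric d_G, let π : G → Q be a surjective homomorphism, and give Q the word metric d_Q of the finite generating set π(X). Suppose there exists a map t : Q → G with π∘t = id_Q which is coarsely Lipschitz, i.e. for every R ≥ 0 there exists S ≥ 0 such that d_Q(q,q') ≤ R implies d_G(t(q),t(q')) ≤ S. Let χ : Q → ℝ be a nonzero character. If χ∘π ∈ Σ^m(G;ℤ) then χ ∈ Σ^m(Q;ℤ). -/

import Mathlib

open Finsupp

variable {G : Type*} [Group G]

/-- Word length with respect to a generating set `X`. -/
noncomputable def wordLength (X : Finset G) (g : G) : ℕ :=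
  sInf {n : ℕ | ∃ w : List G, w.length = n ∧ (∀ x ∈ w, x ∈ X ∨ x⁻¹ ∈ X) ∧ w.prod = g}

/-- The left-invariant word metric `d(g,h) = l(g⁻¹h)`. -/
noncomputable def wordDist (X : Finset G) (g h : G) : ℕ :=
  wordLength X (g⁻¹ * h)

/-- `c` is a chain in `C_q^k(S)`: its support consists of `(q+1)`-tuples of elements of `S`
that are pairwise at distance at most `k`. -/
def VRChain (X : Finset G) (S : Set G) (q k : ℕ) (c : (Fin (q + 1) → G) →₀ ℤ) : Prop :=
  ∀ σ ∈ c.support, (∀ i, σ i ∈ S) ∧ ∀ i j, wordDist X (σ i) (σ j) ≤ k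

/-- The simplicial boundary map `∂_{q+1} : ℤ[G^{q+2}] → ℤ[G^{q+1}]`. -/
noncomputable def bnd (q : ℕ) :
    ((Fin (q + 2) → G) →₀ ℤ) →ₗ[ℤ] ((Fin (q + 1) → G) →₀ ℤ) :=
  Finsupp.lift _ ℤ _
    (fun σ => ∑ i : Fin (q + 2), ((-1 : ℤ) ^ (i : ℕ)) • Finsupp.single (σ ∘ i.succAbove) (1 : ℤ))

/-- The augmentation `ε : ℤ[G] → ℤ` sending every vertex to `1`. -/
noncomputable def aug : ((Fin 1 → G) →₀ ℤ) →ₗ[ℤ] ℤ :=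
  Finsupp.lift ℤ ℤ (Fin 1 → G) (fun _ => (1 : ℤ))

/-- Reduced `q`-cycles at scale `k` on `S` bound at scale `l` on `S`. -/
def BoundsAt (X : Finset G) (S : Set G) : ℕ → ℕ → ℕ → Prop
  | 0, k, l => ∀ z : (Fin 1 → G) →₀ ℤ, VRChain X S 0 k z → aug z = 0 →
      ∃ c : (Fin 2 → G) →₀ ℤ, VRChain X S 1 l c ∧ bnd 0 c = z
  | (q + 1), k, l => ∀ z : (Fin (q + 2) → G) →₀ ℤ, VRChain X S (q + 1) k z → bnd q z = 0 →
      ∃ c : (Fin (q + 3) → G) →₀ ℤ, VRChain X S (q + 2) l c ∧ bnd (q + 1) c = z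

/-- `S ⊆ G` is of type `FP_m`. -/
def TypeFP (X : Finset G) (S : Set G) (m : ℕ) : Prop :=
  ∀ q < m, ∀ k : ℕ, ∃ l ≥ k, BoundsAt X S q k l

/-- A character on `G` is a homomorphism to the additive reals. -/
def IsCharacter (χ : G → ℝ) : Prop :=
  ∀ g h : G, χ (g * h) = χ g + χ h

/-- Simultaneous left translation on chains, making `ℤ[G^{q+1}]` a `ℤG`-module. -/
noncomputable def lTranslate (g : G) (q : ℕ) :
    ((Fin (q + 1) → G) →₀ ℤ) →ₗ[ℤ] ((Fin (q + 1) → G) →₀ ℤ) :=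
  Finsupp.lmapDomain ℤ ℤ (fun σ i => g * σ i)

/-- A chain endomorphism of `ℤG`-complexes on `(C_q^k(G))_{q=0,…,m}` extending the identity
on `ℤ`: each `φ q` maps scale-`k` chains to scale-`k` chains, is `G`-equivariant,
satisfies `ε ∘ φ₀ = ε` and commutes with the boundary maps. -/
def IsChainEndo (X : Finset G) (k m : ℕ)
    (φ : ∀ q : ℕ, ((Fin (q + 1) → G) →₀ ℤ) →ₗ[ℤ] ((Fin (q + 1) → G) →₀ ℤ)) : Prop :=
  (∀ q ≤ m, ∀ c, VRChain X Set.univ q k c → VRChain X Set.univ q k (φ q c)) ∧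
  (∀ q ≤ m, ∀ (g : G) (c), VRChain X Set.univ q k c →
    φ q (lTranslate g q c) = lTranslate g q (φ q c)) ∧
  (∀ c : (Fin 1 → G) →₀ ℤ, VRChain X Set.univ 0 k c → aug (φ 0 c) = aug c) ∧
  (∀ q : ℕ, q + 1 ≤ m → ∀ c : (Fin (q + 2) → G) →₀ ℤ, VRChain X Set.univ (q + 1) k c →
    bnd q (φ (q + 1) c) = φ q (bnd q c))

/-- The valuation of a simplex: `v(σ) = min_i χ(g_i)` (with values in `EReal`). -/
noncomputable def vsimp (χ : G → ℝ) {q : ℕ} (σ : Fin (q + 1) → G) : EReal :=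
  ⨅ i, (χ (σ i) : EReal)

/-- The valuation of a chain: the minimum of the valuations of the simplices in its support
(`⊤` for the zero chain). -/
noncomputable def vchain (χ : G → ℝ) {q : ℕ} (c : (Fin (q + 1) → G) →₀ ℤ) : EReal :=
  ⨅ σ ∈ c.support, vsimp χ σ


section Aux

lemma wordLength_map_le_aux {G Q : Type*} [Group G] [Group Q] [DecidableEq Q] (X : Finset G)
    (hX : Subgroup.closure (X : Set G) = ⊤) (π : G →* Q) (g : G) :
    wordLength (X.image (fun g => π g)) (π g) ≤ wordLength X g := by
  have hg : g ∈ Subgroup.closure (X : Set G) := hX ▸ Subgroup.mem_top g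
  have hg' : g ∈ Submonoid.closure ((X : Set G) ∪ (X : Set G)⁻¹) := by
    rw [← Subgroup.closure_toSubmonoid] at *; exact hg
  obtain ⟨w, hw, hprod⟩ := Submonoid.exists_list_of_mem_closure hg'
  have hne : {n : ℕ | ∃ w : List G, w.length = n ∧ (∀ x ∈ w, x ∈ X ∨ x⁻¹ ∈ X) ∧ w.prod = g}.Nonempty := by
    refine ⟨w.length, w, rfl, ?_, hprod⟩
    intro x hx
    rcases hw x hx with h | h
    · exact Or.inl h
    · exact Or.inr h
  obtain ⟨v, hvlen, hvX, hvprod⟩ := Nat.sInf_mem hne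
  apply Nat.sInf_le
  refine ⟨v.map π, by simpa [wordLength] using hvlen, ?_, by rw [← map_list_prod, hvprod]⟩
  intro x hx
  simp only [List.mem_map] at hx
  obtain ⟨y, hy, rfl⟩ := hx
  rcases hvX y hy with h | h
  · exact Or.inl (Finset.mem_image_of_mem _ h)
  · exact Or.inr (by rw [← map_inv]; exact Finset.mem_image_of_mem _ h)

lemma wordDist_map_le_aux {G Q : Type*} [Group G] [Group Q] [DecidableEq Q] (X : Finset G)
    (hX : Subgroup.closure (X : Set G) = ⊤) (π : G →* Q) (g h : G) :
    wordDist (X.image (fun g => π g)) (π g) (π h) ≤ wordDist X g h := by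
  have := wordLength_map_le_aux X hX π (g⁻¹ * h)
  simpa [wordDist, map_mul, map_inv] using this

noncomputable def mapChain {G Q : Type*} (f : G → Q) (q : ℕ) :
    ((Fin (q + 1) → G) →₀ ℤ) →ₗ[ℤ] ((Fin (q + 1) → Q) →₀ ℤ) :=
  Finsupp.lmapDomain ℤ ℤ (fun σ => f ∘ σ)

lemma mapChain_single {G Q : Type*} (f : G → Q) (q : ℕ) (σ : Fin (q+1) → G) (b : ℤ) :
    mapChain f q (Finsupp.single σ b) = Finsupp.single (f ∘ σ) b := by
  simp [mapChain, Finsupp.mapDomain_single]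

lemma bnd_single {G : Type*} [Group G] (q : ℕ) (σ : Fin (q + 2) → G) (b : ℤ) :
    bnd q (Finsupp.single σ b) =
      b • ∑ i : Fin (q + 2), ((-1 : ℤ) ^ (i : ℕ)) • Finsupp.single (σ ∘ i.succAbove) (1 : ℤ) := by
  simp [bnd, Finsupp.lift_apply, Finsupp.sum_single_index]

lemma aug_single {G : Type*} [Group G] (σ : Fin 1 → G) (b : ℤ) :
    aug (Finsupp.single σ b) = b := by
  simp [aug, Finsupp.lift_apply, Finsupp.sum_single_index]

lemma bnd_mapChain {G Q : Type*} [Group G] [Group Q] (f : G → Q) (q : ℕ)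
    (c : (Fin (q + 2) → G) →₀ ℤ) :
    bnd q (mapChain f (q + 1) c) = mapChain f q (bnd q c) := by
  have : (bnd q).comp (mapChain f (q + 1)) = (mapChain f q).comp (bnd q) := by
    apply Finsupp.lhom_ext
    intro σ b
    simp only [LinearMap.comp_apply, mapChain_single, bnd_single, map_smul, map_sum,
      mapChain_single, Function.comp_assoc]
  exact LinearMap.congr_fun this c

lemma aug_mapChain {G Q : Type*} [Group G] [Group Q] (f : G → Q) (c : (Fin 1 → G) →₀ ℤ) :
    aug (mapChain f 0 c) = aug c := by
  have : (aug (G := Q)).comp (mapChain f 0) = aug := by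
    apply Finsupp.lhom_ext
    intro σ b
    simp [mapChain_single, aug_single]
  exact LinearMap.congr_fun this c

lemma mapChain_mapChain {G Q R : Type*} (f : G → Q) (g : Q → R) (q : ℕ)
    (c : (Fin (q + 1) → G) →₀ ℤ) :
    mapChain g q (mapChain f q c) = mapChain (g ∘ f) q c := by
  simp [mapChain, Finsupp.lmapDomain_apply, ← Finsupp.mapDomain_comp]
  rfl

lemma mapChain_id {G : Type*} (q : ℕ) (c : (Fin (q + 1) → G) →₀ ℤ) :
    mapChain id q c = c := by
  simp [mapChain, Finsupp.lmapDomain_apply]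
  convert Finsupp.mapDomain_id
  rfl

lemma mapChain_support {G Q : Type*} (f : G → Q) (q : ℕ) (c : (Fin (q + 1) → G) →₀ ℤ)
    (τ : Fin (q + 1) → Q) (hτ : τ ∈ (mapChain f q c).support) :
    ∃ σ ∈ c.support, τ = f ∘ σ := by
  classical
  have := Finsupp.mapDomain_support (f := fun σ : Fin (q + 1) → G => f ∘ σ) (s := c)
  have h2 : τ ∈ c.support.image (fun σ => f ∘ σ) := by
    apply this
    simpa [mapChain, Finsupp.lmapDomain_apply] using hτ
  obtain ⟨σ, hσ, rfl⟩ := Finset.mem_image.mp h2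
  exact ⟨σ, hσ, rfl⟩

end Aux

/-- If `π : G → Q` admits a coarsely Lipschitz transversal and `χ∘π ∈ Σ^m(G;ℤ)`, then
`χ ∈ Σ^m(Q;ℤ)`. -/
theorem stmt8 {G Q : Type*} [Group G] [Group Q] [DecidableEq Q]
    (X : Finset G) (hX : Subgroup.closure (X : Set G) = ⊤)
    (π : G →* Q) (hsurj : Function.Surjective π)
    (t : Q → G) (ht : ∀ q, π (t q) = q)
    (hlip : ∀ R : ℕ, ∃ S : ℕ, ∀ q q' : Q,
      wordDist (X.image (fun g => π g)) q q' ≤ R → wordDist X (t q) (t q') ≤ S)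
    (m : ℕ) (χ : Q → ℝ) (hχ : IsCharacter χ) (hne : ∃ q, χ q ≠ 0)
    (h : TypeFP X {g : G | 0 ≤ χ (π g)} m) :
    TypeFP (X.image (fun g => π g)) {q : Q | 0 ≤ χ q} m := by
  intro q hq k
  obtain ⟨S, hS⟩ := hlip k
  obtain ⟨l, hl, hb⟩ := h q hq (max S k)
  refine ⟨l, le_trans (le_max_right S k) hl, ?_⟩
  -- common facts
  have hlift : ∀ (q' : ℕ) (z : (Fin (q' + 1) → Q) →₀ ℤ),
      VRChain (X.image (fun g => π g)) {q : Q | 0 ≤ χ q} q' k z →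
      VRChain X {g : G | 0 ≤ χ (π g)} q' (max S k) (mapChain t q' z) := by
    intro q' z hz τ hτ
    obtain ⟨σ, hσ, rfl⟩ := mapChain_support t q' z τ hτ
    obtain ⟨hσS, hσd⟩ := hz σ hσ
    constructor
    · intro i
      show 0 ≤ χ (π (t (σ i)))
      rw [ht]
      exact hσS i
    · intro i j
      exact (hS _ _ (hσd i j)).trans (le_max_left S k)
  have hpush : ∀ (q' : ℕ) (c : (Fin (q' + 1) → G) →₀ ℤ),
      VRChain X {g : G | 0 ≤ χ (π g)} q' l c →
      VRChain (X.image (fun g => π g)) {q : Q | 0 ≤ χ q} q' l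
        (mapChain (fun g => π g) q' c) := by
    intro q' c hc τ hτ
    obtain ⟨σ, hσ, rfl⟩ := mapChain_support (fun g => π g) q' c τ hτ
    obtain ⟨hσS, hσd⟩ := hc σ hσ
    constructor
    · intro i
      exact hσS i
    · intro i j
      exact (wordDist_map_le_aux X hX π _ _).trans (hσd i j)
  have hcomp : ∀ (q' : ℕ) (z : (Fin (q' + 1) → Q) →₀ ℤ),
      mapChain (fun g => π g) q' (mapChain t q' z) = z := by
    intro q' z
    rw [mapChain_mapChain,
      show ((fun g : G => π g) ∘ t) = id from funext ht, mapChain_id]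
  cases q with
  | zero =>
    intro z hz hzaug
    obtain ⟨c, hc, hbc⟩ := hb (mapChain t 0 z) (hlift 0 z hz)
      (by rw [aug_mapChain]; exact hzaug)
    refine ⟨mapChain (fun g => π g) 1 c, hpush 1 c hc, ?_⟩
    rw [bnd_mapChain, hbc, hcomp]
  | succ q =>
    intro z hz hzcyc
    obtain ⟨c, hc, hbc⟩ := hb (mapChain t (q + 1) z) (hlift (q + 1) z hz)
      (by rw [bnd_mapChain, hzcyc, map_zero])
    refine ⟨mapChain (fun g => π g) (q + 2) c, hpush (q + 2) c hc, ?_⟩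
    rw [bnd_mapChain, hbc, hcomp]
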